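/- Let X be a compact Hausdorff space with X = X₁ ∪ X₂, where each X_i (with the subspace topology) has a point-countable base. Then cl_X(X₁) ∩ cl_X(X₂) has a point-countable base, and hence (by Miščenko's theorem for compact spaces) cl_X(X₁) ∩ cl_X(X₂) is metrizable. -/

import Mathlib

def HasPointCountableBase (T : Type*) [TopologicalSpace T] : Prop :=
  ∃ ℬ : Set (Set T), TopologicalSpace.IsTopologicalBasis ℬ ∧
    ∀ x : T, {B ∈ ℬ | x ∈ B}.Countable

open Set Filter Topology TopologicalSpace

section CIM

attribute [local instance] Classical.propDecidable

variable {X : Type*} [TopologicalSpace X]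

structure RelBase (S : Set X) (𝒟 : Set (Set X)) : Prop where
  rel : ∀ D ∈ 𝒟, ∃ V, IsOpen V ∧ D = V ∩ S
  basis : ∀ x ∈ S, ∀ U : Set X, IsOpen U → x ∈ U → ∃ D ∈ 𝒟, x ∈ D ∧ D ⊆ U
  pc : ∀ x : X, {D ∈ 𝒟 | x ∈ D}.Countable

structure Onion (z : X) (B : ℕ → Set X) (O : ℕ → Set X) : Prop where
  op : ∀ m, IsOpen (O m)
  mem : ∀ m, z ∈ O m
  cl : ∀ m, closure (O (m + 1)) ⊆ O m
  sub : ∀ m, O m ⊆ B m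

def IsMinCover {α : Type*} (𝒟 : Set (Set α)) (S : Set α) (T : Finset (Set α)) : Prop :=
  ↑T ⊆ 𝒟 ∧ S ⊆ ⋃₀ ↑T ∧ ∀ t ∈ T, ¬ S ⊆ ⋃₀ ↑(T.erase t)


lemma relBase_of_subtype {S : Set X} (h : HasPointCountableBase ↥S) :
    ∃ 𝒟, RelBase S 𝒟 := by
  obtain ⟨ℬ, hbasis, hpc⟩ := h
  refine ⟨(fun B => (↑) '' B) '' ℬ, ?_, ?_, ?_⟩
  · rintro D ⟨B, hB, rfl⟩
    obtain ⟨V, hV, hBV⟩ := isOpen_induced_iff.mp (hbasis.isOpen hB)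
    refine ⟨V, hV, ?_⟩
    show Subtype.val '' B = V ∩ S
    rw [← hBV, Subtype.image_preimage_coe, inter_comm]
  · intro x hx U hU hxU
    obtain ⟨B, hB, hxB, hBU⟩ := hbasis.exists_subset_of_mem_open
      (show (⟨x, hx⟩ : ↥S) ∈ ((↑) : ↥S → X) ⁻¹' U from hxU) (hU.preimage continuous_subtype_val)
    refine ⟨(↑) '' B, ⟨B, hB, rfl⟩, ⟨⟨x, hx⟩, hxB, rfl⟩, ?_⟩
    rintro y ⟨b, hb, rfl⟩; exact hBU hb
  · intro x
    by_cases hx : x ∈ S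
    · have : {D ∈ (fun B => (↑) '' B) '' ℬ | x ∈ D} ⊆
          (fun B => (↑) '' B) '' {B ∈ ℬ | (⟨x, hx⟩ : ↥S) ∈ B} := by
        rintro D ⟨⟨B, hB, rfl⟩, hxD⟩
        obtain ⟨b, hb, hbx⟩ := hxD
        have : b = ⟨x, hx⟩ := Subtype.ext hbx
        exact ⟨B, ⟨hB, this ▸ hb⟩, rfl⟩
      exact ((hpc ⟨x, hx⟩).image _).mono this
    · have : {D ∈ (fun B => (↑) '' B) '' ℬ | x ∈ D} = ∅ := by
        ext D
        simp only [mem_sep_iff, mem_empty_iff_false, iff_false, not_and]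
        rintro ⟨B, hB, rfl⟩ ⟨b, hb, rfl⟩
        exact hx b.2
      rw [this]; exact countable_empty

lemma RelBase.mono {S T : Set X} {𝒟 : Set (Set X)} (h : RelBase S 𝒟) (hTS : T ⊆ S) :
    RelBase T ((fun D => D ∩ T) '' 𝒟) := by
  refine ⟨?_, ?_, ?_⟩
  · rintro D ⟨D', hD', rfl⟩
    obtain ⟨V, hV, rfl⟩ := h.rel D' hD'
    refine ⟨V, hV, ?_⟩
    show V ∩ S ∩ T = V ∩ T
    rw [inter_assoc, inter_eq_self_of_subset_right hTS]
  · intro x hx U hU hxU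
    obtain ⟨D, hD, hxD, hDU⟩ := h.basis x (hTS hx) U hU hxU
    exact ⟨D ∩ T, ⟨D, hD, rfl⟩, ⟨hxD, hx⟩, (inter_subset_left).trans hDU⟩
  · intro x
    have : {E ∈ (fun D => D ∩ T) '' 𝒟 | x ∈ E} ⊆ (fun D => D ∩ T) '' {D ∈ 𝒟 | x ∈ D} := by
      rintro E ⟨⟨D, hD, rfl⟩, hxE⟩
      exact ⟨D, ⟨hD, hxE.1⟩, rfl⟩
    exact ((h.pc x).image _).mono this

lemma exists_mapClusterPt [CompactSpace X] (u : ℕ → X) :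
    ∃ c, MapClusterPt c atTop u := by
  obtain ⟨c, -, hc⟩ := isCompact_univ.exists_clusterPt
    (f := Filter.map u atTop) (le_principal_iff.mpr univ_mem)
  exact ⟨c, hc⟩

lemma MapClusterPt.freq {c : X} {u : ℕ → X} (h : MapClusterPt c atTop u)
    {N : Set X} (hN : N ∈ 𝓝 c) (m : ℕ) : ∃ n, m ≤ n ∧ u n ∈ N := by
  have h' : ClusterPt c (Filter.map u atTop) := h
  have hV : u '' Ici m ∈ Filter.map u atTop :=
    Filter.mem_map.mpr (Filter.mem_of_superset (Ici_mem_atTop m) (fun n hn => mem_preimage.mpr ⟨n, hn, rfl⟩))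
  obtain ⟨y, hyN, n, hn, rfl⟩ := clusterPt_iff_nonempty.mp h' hN hV
  exact ⟨n, hn, hyN⟩


lemma Onion.antitone {z : X} {B O : ℕ → Set X} (h : Onion z B O) :
    ∀ {m n : ℕ}, m ≤ n → O n ⊆ O m := by
  intro m n hmn
  induction n with
  | zero => simp only [Nat.le_zero] at hmn; subst hmn; exact subset_rfl
  | succ k ih =>
    rcases Nat.lt_or_ge m (k+1) with hlt | hge
    · exact (subset_closure.trans (h.cl k)).trans (ih (Nat.lt_succ_iff.mp hlt))
    · have : m = k + 1 := le_antisymm hmn hge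
      subst this; exact subset_rfl

/-- regularity helper -/
lemma reg_helper [RegularSpace X] {z : X} {U : Set X} (hU : IsOpen U) (hz : z ∈ U) :
    ∃ W, IsOpen W ∧ z ∈ W ∧ closure W ⊆ U := by
  obtain ⟨t, ht, htc, htU⟩ := exists_mem_nhds_isClosed_subset (hU.mem_nhds hz)
  exact ⟨interior t, isOpen_interior, mem_interior_iff_mem_nhds.mpr ht,
    (closure_mono interior_subset).trans (htc.closure_subset.trans htU)⟩

lemma onion_mk [RegularSpace X] {z : X} {B : ℕ → Set X}
    (hB : ∀ m, IsOpen (B m) ∧ z ∈ B m) (P : ℕ → Set X)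
    (hP : ∀ m, IsOpen (P m) ∧ z ∈ P m) :
    ∃ O, Onion z B O ∧ ∀ m, O m ⊆ P m := by
  classical
  -- a total "shrink" function
  have hW : ∀ A : Set X, ∃ W, (IsOpen A ∧ z ∈ A) → (IsOpen W ∧ z ∈ W ∧ closure W ⊆ A) := by
    intro A
    by_cases hA : IsOpen A ∧ z ∈ A
    · obtain ⟨W, h1, h2, h3⟩ := reg_helper hA.1 hA.2
      exact ⟨W, fun _ => ⟨h1, h2, h3⟩⟩
    · exact ⟨∅, fun h => absurd h hA⟩
  choose W hWspec using hW
  -- recursive construction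
  let O : ℕ → Set X := fun m => Nat.rec (B 0 ∩ P 0)
    (fun m prev => B (m+1) ∩ P (m+1) ∩ W prev) m
  have hO0 : O 0 = B 0 ∩ P 0 := rfl
  have hOsucc : ∀ m, O (m+1) = B (m+1) ∩ P (m+1) ∩ W (O m) := fun m => rfl
  have key : ∀ m, IsOpen (O m) ∧ z ∈ O m := by
    intro m
    induction m with
    | zero => exact ⟨(hB 0).1.inter (hP 0).1, ⟨(hB 0).2, (hP 0).2⟩⟩
    | succ k ih =>
      obtain ⟨hWo, hWz, -⟩ := hWspec (O k) ih
      rw [hOsucc k]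
      exact ⟨((hB (k+1)).1.inter (hP (k+1)).1).inter hWo, ⟨⟨(hB (k+1)).2, (hP (k+1)).2⟩, hWz⟩⟩
  refine ⟨O, ⟨fun m => (key m).1, fun m => (key m).2, ?_, ?_⟩, ?_⟩
  · intro m
    obtain ⟨-, -, hWcl⟩ := hWspec (O m) (key m)
    calc closure (O (m+1)) ⊆ closure (W (O m)) := by
          apply closure_mono; rw [hOsucc m]; exact inter_subset_right
      _ ⊆ O m := hWcl
  · intro m
    cases m with
    | zero => rw [hO0]; exact inter_subset_left
    | succ k => rw [hOsucc k]; exact inter_subset_left.trans inter_subset_left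
  · intro m
    cases m with
    | zero => rw [hO0]; exact inter_subset_right
    | succ k => rw [hOsucc k]; exact inter_subset_left.trans inter_subset_right

lemma Onion.closure_mem_iInter {z : X} {B O : ℕ → Set X} (h : Onion z B O)
    {x : X} (hx : ∀ m, x ∈ closure (O m)) : x ∈ ⋂ m, O m :=
  mem_iInter.mpr fun m => h.cl m (hx (m+1))

lemma Onion.isClosed_iInter {z : X} {B O : ℕ → Set X} (h : Onion z B O) :
    IsClosed (⋂ m, O m) := by
  have : (⋂ m, O m) = ⋂ m, closure (O m) := by
    apply subset_antisymm
    · exact fun x hx => mem_iInter.mpr fun m => subset_closure (mem_iInter.mp hx m)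
    · exact fun x hx => h.closure_mem_iInter (fun m => mem_iInter.mp hx m)
  rw [this]
  exact _root_.isClosed_iInter fun m => isClosed_closure


lemma exists_minCover {α : Type*} {𝒟 : Set (Set α)} {S : Set α} :
    ∀ T₀ : Finset (Set α), ↑T₀ ⊆ 𝒟 → S ⊆ ⋃₀ ↑T₀ → ∃ T ⊆ T₀, IsMinCover 𝒟 S T := by
  intro T₀
  induction T₀ using Finset.strongInduction with
  | _ T₀ ih =>
    intro hsub hcov
    by_cases h : ∃ t ∈ T₀, S ⊆ ⋃₀ ↑(T₀.erase t)
    · obtain ⟨t, ht, hcov'⟩ := h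
      obtain ⟨T, hT1, hT2⟩ := ih (T₀.erase t) (Finset.erase_ssubset ht)
        (fun x hx => hsub (Finset.mem_coe.mpr (Finset.mem_of_mem_erase (Finset.mem_coe.mp hx))))
        hcov'
      exact ⟨T, hT1.trans (Finset.erase_subset t T₀), hT2⟩
    · push_neg at h
      exact ⟨T₀, subset_rfl, hsub, hcov, h⟩

lemma minCover_countable {α : Type*} {𝒟 : Set (Set α)}
    (hpc : ∀ x : α, {D ∈ 𝒟 | x ∈ D}.Countable) :
    ∀ n : ℕ, ∀ S : Set α,
      {T : Finset (Set α) | IsMinCover 𝒟 S T ∧ T.card = n}.Countable := by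
  intro n
  induction n with
  | zero =>
    intro S
    apply Set.Countable.mono _ (Set.countable_singleton (∅ : Finset (Set α)))
    rintro T ⟨-, hcard⟩
    exact Finset.card_eq_zero.mp hcard
  | succ n ih =>
    intro S
    rcases S.eq_empty_or_nonempty with rfl | ⟨x₀, hx₀⟩
    · apply Set.Countable.mono _ Set.countable_empty
      rintro T ⟨⟨-, -, hmin⟩, hcard⟩
      obtain ⟨t, ht⟩ := Finset.card_pos.mp (by omega : 0 < T.card)
      exact absurd (empty_subset _) (hmin t ht)
    · -- every minimal cover contains a member containing x₀
      have key : {T : Finset (Set α) | IsMinCover 𝒟 S T ∧ T.card = n + 1} ⊆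
          ⋃ F ∈ {D ∈ 𝒟 | x₀ ∈ D}, (insert F) ''
            {T' : Finset (Set α) | IsMinCover 𝒟 (S \ F) T' ∧ T'.card = n} := by
        rintro T ⟨⟨hsub, hcov, hmin⟩, hcard⟩
        obtain ⟨F, hFT, hx₀F⟩ : ∃ F ∈ T, x₀ ∈ F := by
          obtain ⟨F, hF, hxF⟩ := hcov hx₀
          exact ⟨F, hF, hxF⟩
        refine Set.mem_biUnion ⟨hsub hFT, hx₀F⟩ ⟨T.erase F, ⟨⟨?_, ?_, ?_⟩, ?_⟩, Finset.insert_erase hFT⟩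
        · exact fun D hD => hsub (Finset.mem_coe.mpr (Finset.mem_of_mem_erase (Finset.mem_coe.mp hD)))
        · rintro s ⟨hsS, hsF⟩
          obtain ⟨t, ht, hst⟩ := hcov hsS
          refine ⟨t, Finset.mem_coe.mpr (Finset.mem_erase.mpr ⟨?_, ht⟩), hst⟩
          rintro rfl; exact hsF hst
        · intro t ht hcontra
          have htT : t ∈ T := Finset.mem_of_mem_erase ht
          have htF : t ≠ F := Finset.ne_of_mem_erase ht
          apply hmin t htT
          intro s hsS
          by_cases hsF : s ∈ F
          · exact ⟨F, Finset.mem_coe.mpr (Finset.mem_erase.mpr ⟨Ne.symm htF, hFT⟩), hsF⟩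
          · obtain ⟨t', ht', hst'⟩ := hcontra ⟨hsS, hsF⟩
            have : t' ∈ (T.erase F).erase t := ht'
            refine ⟨t', ?_, hst'⟩
            have h1 := Finset.mem_of_mem_erase (Finset.mem_coe.mp this)
            exact Finset.mem_coe.mpr (Finset.mem_erase.mpr
              ⟨Finset.ne_of_mem_erase (Finset.mem_coe.mp this), Finset.mem_of_mem_erase h1⟩)
        · rw [Finset.card_erase_of_mem hFT, hcard]; omega
      apply Set.Countable.mono key
      exact Set.Countable.biUnion (hpc x₀) (fun F _ => (ih (S \ F)).image _)


theorem miscenko [T2Space X] [RegularSpace X] {K : Set X} (hK : IsCompact K)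
    {𝒟 : Set (Set X)} (hD : RelBase K 𝒟) :
    ∃ 𝒞 ⊆ 𝒟, 𝒞.Countable ∧
      ∀ x ∈ K, ∀ U : Set X, IsOpen U → x ∈ U → ∃ M ∈ 𝒞, x ∈ M ∧ M ⊆ U := by
  -- countably many minimal covers of K
  have hMC : {T : Finset (Set X) | IsMinCover 𝒟 K T}.Countable := by
    have : {T : Finset (Set X) | IsMinCover 𝒟 K T} =
        ⋃ n : ℕ, {T : Finset (Set X) | IsMinCover 𝒟 K T ∧ T.card = n} := by
      ext T; simp only [mem_setOf_eq, mem_iUnion]; exact ⟨fun h => ⟨T.card, h, rfl⟩, fun ⟨n, h, _⟩ => h⟩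
    rw [this]
    exact countable_iUnion fun n => minCover_countable hD.pc n K
  refine ⟨{D | ∃ T, IsMinCover 𝒟 K T ∧ D ∈ T}, ?_, ?_, ?_⟩
  · rintro D ⟨T, hT, hDT⟩; exact hT.1 hDT
  · have : {D | ∃ T, IsMinCover 𝒟 K T ∧ D ∈ T} =
        ⋃ T ∈ {T : Finset (Set X) | IsMinCover 𝒟 K T}, (T : Set (Set X)) := by
      ext D; simp only [mem_setOf_eq, mem_iUnion, Finset.mem_coe, exists_prop]
    rw [this]
    exact hMC.biUnion fun T _ => T.countable_toSet
  · intro x hx U hU hxU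
    obtain ⟨W, hWo, hxW, hWcl⟩ := reg_helper hU hxU
    obtain ⟨Dx, hDx, hxDx, hDxW⟩ := hD.basis x hx W hWo hxW
    -- the cover
    set 𝒰 : Set (Set X) := {Dx} ∪ {D ∈ 𝒟 | x ∉ closure D} with h𝒰
    have h𝒰sub : 𝒰 ⊆ 𝒟 := by
      rintro D (rfl | ⟨hD', -⟩); exacts [hDx, hD']
    have h𝒰cov : K ⊆ ⋃₀ 𝒰 := by
      intro y hy
      by_cases hyx : y = x
      · exact ⟨Dx, Or.inl rfl, hyx ▸ hxDx⟩
      · obtain ⟨A, G, hAo, hGo, hxA, hyG, hAG⟩ := t2_separation (Ne.symm hyx)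
        have hxG : x ∉ closure G := fun hc => by
          obtain ⟨p, hp1, hp2⟩ := mem_closure_iff.mp hc A hAo hxA
          exact Set.disjoint_left.mp hAG hp1 hp2
        obtain ⟨Dy, hDy, hyDy, hDyG⟩ := hD.basis y hy G hGo hyG
        refine ⟨Dy, Or.inr ⟨hDy, fun hc => hxG (closure_mono hDyG hc)⟩, hyDy⟩
    -- choice of open extensions
    have hext : ∀ D ∈ 𝒰, ∃ V, IsOpen V ∧ D = V ∩ K := fun D hD' => hD.rel D (h𝒰sub hD')
    choose! V hVo hVeq using hext
    -- compactness
    have hKV : K ⊆ ⋃ D : 𝒰, V D.1 := by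
      intro y hy
      obtain ⟨D, hD', hyD⟩ := h𝒰cov hy
      exact mem_iUnion.mpr ⟨⟨D, hD'⟩, by rw [hVeq D hD'] at hyD; exact hyD.1⟩
    obtain ⟨t, ht⟩ := hK.elim_finite_subcover (fun D : 𝒰 => V D.1) (fun D => hVo D.1 D.2) hKV
    -- to a Finset of sets
    set T₀ : Finset (Set X) := t.image (fun D : 𝒰 => D.1) with hT₀
    have hT₀sub : ↑T₀ ⊆ 𝒟 := by
      intro D hD'
      simp only [hT₀, Finset.coe_image, Set.mem_image, Finset.mem_coe] at hD'
      obtain ⟨D', -, rfl⟩ := hD'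
      exact h𝒰sub D'.2
    have hT₀cov : K ⊆ ⋃₀ ↑T₀ := by
      intro y hy
      obtain ⟨i, hi⟩ := mem_iUnion.mp (ht hy)
      simp only [mem_iUnion, exists_prop] at hi
      obtain ⟨hit, hyV⟩ := hi
      refine ⟨i.1, ?_, ?_⟩
      · simp only [hT₀, Finset.coe_image, Set.mem_image, Finset.mem_coe]; exact ⟨i, hit, rfl⟩
      · rw [hVeq i.1 i.2]; exact ⟨hyV, hy⟩
    obtain ⟨T, hTsub, hTmin⟩ := exists_minCover T₀ hT₀sub hT₀cov
    -- the member containing x must be Dx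
    obtain ⟨F, hFT, hxF⟩ := hTmin.2.1 hx
    have hF𝒰 : F ∈ 𝒰 := by
      have := hTsub hFT
      simp only [hT₀, Finset.mem_image] at this
      obtain ⟨D', -, rfl⟩ := this
      exact D'.2
    have hFDx : F = Dx := by
      rcases hF𝒰 with h | ⟨-, hxcl⟩
      · exact h
      · exact absurd (subset_closure hxF) hxcl
    exact ⟨Dx, ⟨T, hTmin, hFDx ▸ hFT⟩, hxDx, hDxW.trans (subset_closure.trans hWcl)⟩


lemma pc_cover_ctble {E : Set X}
    (hcl : ∀ u : ℕ → X, (∀ n, u n ∈ E) → ∃ c ∈ E, MapClusterPt c atTop u)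
    {𝒱 : Set (Set X)} (hV : ∀ V ∈ 𝒱, IsOpen V) (hcov : E ⊆ ⋃₀ 𝒱) (hc : 𝒱.Countable) :
    ∃ t : Finset (Set X), ↑t ⊆ 𝒱 ∧ E ⊆ ⋃₀ ↑t := by
  rcases E.eq_empty_or_nonempty with rfl | ⟨x₀, hx₀⟩
  · exact ⟨∅, by simp, by simp⟩
  have h𝒱ne : 𝒱.Nonempty := by
    obtain ⟨V, hV', -⟩ := hcov hx₀; exact ⟨V, hV'⟩
  obtain ⟨w, hw⟩ := (Set.countable_iff_exists_surjective h𝒱ne).mp hc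
  by_contra hfin
  push_neg at hfin
  have key : ∀ m : ℕ, ∃ x, x ∈ E ∧ ∀ k ≤ m, x ∉ (w k : Set X) := by
    intro m
    by_contra hcon
    push_neg at hcon
    apply hfin ((Finset.range (m+1)).image (fun k => (w k : Set X)))
    · intro D hD
      simp only [Finset.coe_image, Finset.coe_range, Set.mem_image, Set.mem_Iio] at hD
      obtain ⟨k, -, rfl⟩ := hD
      exact (w k).2
    · intro x hx
      obtain ⟨k, hk, hxk⟩ := hcon x hx
      exact ⟨(w k : Set X), by
        simp only [Finset.coe_image, Finset.coe_range, Set.mem_image, Set.mem_Iio]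
        exact ⟨k, by omega, rfl⟩, hxk⟩
  choose s hsE hsnot using key
  obtain ⟨c, hcE, hclus⟩ := hcl s hsE
  obtain ⟨V₀, hV₀, hcV₀⟩ := hcov hcE
  obtain ⟨N, hwN⟩ := hw ⟨V₀, hV₀⟩
  have hnhds : V₀ ∈ 𝓝 c := (hV V₀ hV₀).mem_nhds hcV₀
  obtain ⟨n, hNn, hsn⟩ := hclus.freq hnhds N
  have : (w N : Set X) = V₀ := by rw [hwN]
  exact hsnot n N hNn (this ▸ hsn)

lemma pc_main {E : Set X}
    (hcl : ∀ u : ℕ → X, (∀ n, u n ∈ E) → ∃ c ∈ E, MapClusterPt c atTop u)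
    {𝒱 : Set (Set X)} (hV : ∀ V ∈ 𝒱, IsOpen V) (hcov : E ⊆ ⋃₀ 𝒱)
    (hpc : ∀ x ∈ E, {V ∈ 𝒱 | x ∈ V}.Countable) :
    ∃ t : Finset (Set X), ↑t ⊆ 𝒱 ∧ E ⊆ ⋃₀ ↑t := by
  by_contra hfin
  push_neg at hfin
  have hEne : E.Nonempty := by
    rcases E.eq_empty_or_nonempty with rfl | h
    · exact absurd (empty_subset _) (hfin ∅ (by simp))
    · exact h
  obtain ⟨x₀, hx₀⟩ := hEne
  -- no countable subcover either
  have hnoctble : ∀ 𝒲 ⊆ 𝒱, 𝒲.Countable → ¬ E ⊆ ⋃₀ 𝒲 := by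
    intro 𝒲 h𝒲 hc hcov'
    obtain ⟨t, ht1, ht2⟩ := pc_cover_ctble hcl (fun V hV' => hV V (h𝒲 hV')) hcov' hc
    exact hfin t (ht1.trans h𝒲) ht2
  -- the avoidance function
  have key : ∀ s : Set X, ∃ x, (s.Countable ∧ s ⊆ E) →
      (x ∈ E ∧ ∀ V ∈ 𝒱, x ∈ V → ∀ y ∈ s, y ∉ V) := by
    intro s
    by_cases hs : s.Countable ∧ s ⊆ E
    · set 𝒲 := {V ∈ 𝒱 | ∃ y ∈ s, y ∈ V} with h𝒲
      have h𝒲c : 𝒲.Countable := by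
        have : 𝒲 ⊆ ⋃ y ∈ s, {V ∈ 𝒱 | y ∈ V} := by
          rintro V ⟨hV', y, hy, hyV⟩
          exact mem_biUnion hy ⟨hV', hyV⟩
        exact ((hs.1.biUnion fun y hy => hpc y (hs.2 hy)).mono this)
      have hno : ¬ E ⊆ ⋃₀ 𝒲 := hnoctble 𝒲 (fun V hV' => hV'.1) h𝒲c
      obtain ⟨x, hxE, hx𝒲⟩ : ∃ x ∈ E, x ∉ ⋃₀ 𝒲 := by
        by_contra hcon; push_neg at hcon; exact hno hcon
      refine ⟨x, fun _ => ⟨hxE, ?_⟩⟩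
      intro V hV' hxV y hy hyV
      exact hx𝒲 ⟨V, ⟨hV', y, hy, hyV⟩, hxV⟩
    · exact ⟨x₀, fun h => absurd h hs⟩
  choose f hf using key
  -- the state recursion
  let g : ℕ → Set X := fun n => Nat.rec (∅ : Set X) (fun _ prev => prev ∪ {f prev}) n
  have hg0 : g 0 = ∅ := rfl
  have hgsucc : ∀ n, g (n+1) = g n ∪ {f (g n)} := fun n => rfl
  set z : ℕ → X := fun n => f (g n) with hz
  have hginv : ∀ n, (g n).Countable ∧ g n ⊆ E := by
    intro n
    induction n with
    | zero => rw [hg0]; exact ⟨countable_empty, empty_subset _⟩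
    | succ k ih =>
      rw [hgsucc k]
      exact ⟨ih.1.union (countable_singleton _),
        union_subset ih.2 (singleton_subset_iff.mpr (hf (g k) ih).1)⟩
  have hzE : ∀ n, z n ∈ E := fun n => (hf (g n) (hginv n)).1
  have hgmono : ∀ {m n : ℕ}, m ≤ n → g m ⊆ g n := by
    intro m n hmn
    induction n with
    | zero => simp only [Nat.le_zero] at hmn; subst hmn; exact subset_rfl
    | succ k ih =>
      rcases Nat.lt_or_ge m (k+1) with hlt | hge
      · refine (ih (Nat.lt_succ_iff.mp hlt)).trans ?_
        rw [hgsucc k]; exact subset_union_left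
      · have : m = k + 1 := le_antisymm hmn hge
        subst this; exact subset_rfl
  have hzmem : ∀ {m n : ℕ}, m < n → z m ∈ g n := by
    intro m n hmn
    have : z m ∈ g (m+1) := by rw [hgsucc m]; exact Or.inr rfl
    exact hgmono hmn this
  -- conclude
  obtain ⟨c, hcE, hclus⟩ := hcl z hzE
  obtain ⟨V₀, hV₀, hcV₀⟩ := hcov hcE
  have hnhds : V₀ ∈ 𝓝 c := (hV V₀ hV₀).mem_nhds hcV₀
  obtain ⟨n, -, hzn⟩ := hclus.freq hnhds 0
  obtain ⟨m, hm, hzm⟩ := hclus.freq hnhds (n+1)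
  exact (hf (g m) (hginv m)).2 V₀ hV₀ hzm (z n) (hzmem (by omega)) hzn


theorem lemma_T [CompactSpace X] [T2Space X] {X₁ X₂ : Set X} (hcov : X₁ ∪ X₂ = univ)
    {𝒟₁ 𝒟₂ : Set (Set X)} (h1 : RelBase X₁ 𝒟₁) (h2 : RelBase X₂ 𝒟₂)
    {z : X} (hz2 : z ∈ X₂) (hz1c : z ∈ closure X₁) (hz1 : z ∉ X₁) :
    ∃ T ⊆ X₁, T.Countable ∧ z ∈ closure T := by
  by_contra hcon
  push_neg at hcon
  have hmem : ∀ x : X, x ∈ X₁ ∨ x ∈ X₂ := by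
    intro x
    have : x ∈ X₁ ∪ X₂ := hcov ▸ mem_univ x
    exact this
  -- the countable relative neighbourhood system at z in X₂
  have h𝒢ne : {D ∈ 𝒟₂ | z ∈ D}.Nonempty := by
    obtain ⟨D, hD, hzD, -⟩ := h2.basis z hz2 univ isOpen_univ trivial
    exact ⟨D, hD, hzD⟩
  obtain ⟨d, hd⟩ := (Set.countable_iff_exists_surjective h𝒢ne).mp (h2.pc z)
  have hdmem : ∀ n, (d n : Set X) ∈ 𝒟₂ ∧ z ∈ (d n : Set X) := fun n => (d n).2
  have hdall : ∀ D ∈ 𝒟₂, z ∈ D → ∃ n, (d n : Set X) = D := by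
    intro D hD hzD
    obtain ⟨n, hn⟩ := hd ⟨D, hD, hzD⟩
    exact ⟨n, congrArg Subtype.val hn⟩
  have hVd : ∀ n, ∃ V, IsOpen V ∧ (d n : Set X) = V ∩ X₂ := fun n => h2.rel _ (hdmem n).1
  choose Vd hVdo hVdeq using hVd
  set B : ℕ → Set X := fun m => ⋂ k ∈ Finset.range (m+1), Vd k with hBdef
  have hBo : ∀ m, IsOpen (B m) ∧ z ∈ B m := by
    intro m
    constructor
    · exact isOpen_biInter_finset fun k _ => hVdo k
    · exact mem_iInter₂.mpr fun k _ => by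
        have := (hdmem k).2; rw [hVdeq k] at this; exact this.1
  have hBVd : ∀ m k, k ≤ m → B m ⊆ Vd k := by
    intro m k hk x hx
    exact mem_iInter₂.mp hx k (Finset.mem_range.mpr (by omega))
  have hBX₂ : ∀ x ∈ X₂, (∀ m, x ∈ B m) → x = z := by
    intro x hx hxB
    by_contra hne
    obtain ⟨U, U', hUo, hU'o, hzU, hxU', hdisj⟩ := t2_separation (show z ≠ x from fun h => hne h.symm)
    obtain ⟨D, hD, hzD, hDU⟩ := h2.basis z hz2 U hUo hzU
    obtain ⟨n, hn⟩ := hdall D hD hzD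
    have hxVd : x ∈ Vd n := hBVd n n le_rfl (hxB n)
    have hxD : x ∈ (d n : Set X) := by rw [hVdeq n]; exact ⟨hxVd, hx⟩
    rw [hn] at hxD
    exact disjoint_left.mp hdisj (hDU hxD) hxU'
  -- residues
  by_cases hP1 : ∃ O, Onion z B O ∧ (⋂ m, O m) ∩ X₁ = ∅
  · -- (P1): the residue is {z}; a countable sequence of X₁ clusters at z
    obtain ⟨O, hO, hOempty⟩ := hP1
    have hZeq : (⋂ m, O m) = {z} := by
      apply subset_antisymm
      · intro x hx
        rcases hmem x with h | h
        · exfalso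
          have hmem' : x ∈ (⋂ m, O m) ∩ X₁ := ⟨hx, h⟩
          rw [hOempty] at hmem'
          exact hmem'
        · exact mem_singleton_iff.mpr (hBX₂ x h (fun m => hO.sub m (mem_iInter.mp hx m)))
      · intro x hx
        simp only [mem_singleton_iff] at hx
        subst hx
        exact mem_iInter.mpr hO.mem
    have hne : ∀ m, (O m ∩ X₁).Nonempty := fun m =>
      mem_closure_iff.mp hz1c (O m) (hO.op m) (hO.mem m)
    choose t ht using hne
    obtain ⟨c, hc⟩ := exists_mapClusterPt t
    have hcZ : c ∈ ⋂ m, O m := by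
      apply hO.closure_mem_iInter
      intro m
      rw [mem_closure_iff_nhds]
      intro N hN
      obtain ⟨n, hmn, hn⟩ := hc.freq hN m
      exact ⟨t n, hn, hO.antitone hmn (ht n).1⟩
    rw [hZeq, mem_singleton_iff] at hcZ
    subst hcZ
    apply hcon (Set.range t) (by rintro x ⟨n, rfl⟩; exact (ht n).2) (countable_range t)
    rw [mem_closure_iff_nhds]
    intro N hN
    obtain ⟨n, -, hn⟩ := hc.freq hN 0
    exact ⟨t n, hn, ⟨n, rfl⟩⟩
  · -- (P2)
    push_neg at hP1
    have hP2 : ∀ O, Onion z B O → ((⋂ m, O m) ∩ X₁).Nonempty := hP1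
    obtain ⟨O0, hO0, -⟩ := onion_mk hBo (fun _ => univ) (fun _ => ⟨isOpen_univ, trivial⟩)
    set Z₀ : Set X := ⋂ m, O0 m with hZ₀def
    have lemS : ∀ s : Set X, ∃ x, (s.Countable ∧ s ⊆ X₁) →
        (x ∈ X₁ ∧ x ∈ Z₀ ∧ x ∉ closure s) := by
      intro s
      by_cases hs : s.Countable ∧ s ⊆ X₁
      · have hzs : z ∉ closure s := hcon s hs.2 hs.1
        obtain ⟨O', hO', hO'P⟩ := onion_mk hBo (fun m => O0 m ∩ (closure s)ᶜ)
          (fun m => ⟨(hO0.op m).inter isClosed_closure.isOpen_compl, ⟨hO0.mem m, hzs⟩⟩)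
        obtain ⟨x, hxZ, hxX₁⟩ := hP2 O' hO'
        refine ⟨x, fun _ => ⟨hxX₁, ?_, ?_⟩⟩
        · exact mem_iInter.mpr fun m => ((hO'P m).trans inter_subset_left) (mem_iInter.mp hxZ m)
        · exact ((hO'P 0).trans inter_subset_right) (mem_iInter.mp hxZ 0)
      · exact ⟨z, fun h => absurd h hs⟩
    choose F hF using lemS
    -- transfinite construction over a well-order of ℝ
    have hwf : WellFounded (WellOrderingRel : ℝ → ℝ → Prop) := IsWellFounded.wf
    set f : ℝ → X := hwf.fix (fun a ih => F {x | ∃ b, ∃ hb : WellOrderingRel b a, ih b hb = x})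
      with hfdef
    have hfeq : ∀ a, f a = F (f '' {b | WellOrderingRel b a}) := by
      intro a
      show hwf.fix _ a = _
      rw [WellFounded.fix_eq]
      congr 1
      ext x
      simp only [mem_setOf_eq, mem_image, exists_prop]
      exact Iff.rfl
    set J : Set ℝ := {a | {b | WellOrderingRel b a}.Countable} with hJdef
    have hJdc : ∀ {a b}, WellOrderingRel b a → a ∈ J → b ∈ J := by
      intro a b hba ha
      exact ha.mono (fun c hc => trans_of WellOrderingRel hc hba)
    have hfJ : ∀ a ∈ J, f a ∈ X₁ ∧ f a ∈ Z₀ ∧ f a ∉ closure (f '' {b | WellOrderingRel b a}) := by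
      intro a
      induction a using hwf.induction with
      | _ a ih =>
        intro haJ
        have hsub : f '' {b | WellOrderingRel b a} ⊆ X₁ := by
          rintro x ⟨b, hb, rfl⟩
          exact (ih b hb (hJdc hb haJ)).1
        have hctble : (f '' {b | WellOrderingRel b a}).Countable := Set.Countable.image haJ f
        rw [hfeq a]
        exact hF _ ⟨hctble, hsub⟩
    have hJunc : ¬ J.Countable := by
      by_cases hall : ∀ a, a ∈ J
      · intro hc
        exact Set.not_countable_univ (hc.mono (fun a _ => hall a))
      · push_neg at hall
        obtain ⟨a, ha⟩ := hall
        set a₀ : ℝ := hwf.min Jᶜ ⟨a, ha⟩ with ha₀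
        have ha₀J : a₀ ∉ J := hwf.min_mem Jᶜ ⟨a, ha⟩
        have hJeq : J = {b | WellOrderingRel b a₀} := by
          apply subset_antisymm
          · intro b hb
            rcases trichotomous_of WellOrderingRel b a₀ with h | h | h
            · exact h
            · exact absurd (h ▸ hb) ha₀J
            · exact absurd (hJdc h hb) ha₀J
          · intro b hb
            by_contra hbJ
            exact hwf.not_lt_min Jᶜ hbJ hb
        intro hc
        exact ha₀J (by rw [hJdef]; exact (hJeq ▸ hc : ({b | WellOrderingRel b a₀}).Countable))
    have hinj : InjOn f J := by
      intro a ha b hb hab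
      by_contra hne
      rcases trichotomous_of WellOrderingRel a b with h | h | h
      · exact (hfJ b hb).2.2 (subset_closure ⟨a, h, hab⟩)
      · exact hne h
      · exact (hfJ a ha).2.2 (subset_closure ⟨b, h, hab.symm⟩)
    set D : Set X := f '' J with hDdef
    have hDX₁ : D ⊆ X₁ := by rintro x ⟨a, ha, rfl⟩; exact (hfJ a ha).1
    have hDZ₀ : D ⊆ Z₀ := by rintro x ⟨a, ha, rfl⟩; exact (hfJ a ha).2.1
    have hclD : closure D ⊆ Z₀ := hO0.isClosed_iInter.closure_subset_iff.mpr hDZ₀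
    have hZ₀X₂ : ∀ x ∈ Z₀, x ∈ X₂ → x = z := by
      intro x hx hx2
      exact hBX₂ x hx2 (fun m => hO0.sub m (mem_iInter.mp hx m))
    have hclDspec : ∀ x ∈ closure D, x ≠ z → x ∈ X₁ := by
      intro x hx hne
      rcases hmem x with h | h
      · exact h
      · exact absurd (hZ₀X₂ x (hclD hx) h) hne
    have hfib : ∀ x : X, {a ∈ J | f a = x}.Countable := by
      intro x
      apply Set.Subsingleton.countable
      rintro a ⟨ha, hfa⟩ b ⟨hb, hfb⟩
      exact hinj ha hb (hfa.trans hfb.symm)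
    by_cases hzD : z ∈ closure D
    · -- case (h): E := closure D ∩ X₁ is "sequentially cluster-compact", hence compact ∋ z
      set E : Set X := closure D ∩ X₁ with hEdef
      have hDE : D ⊆ E := fun x hx => ⟨subset_closure hx, hDX₁ hx⟩
      have hclDE : ∀ x ∈ closure D, x = z ∨ x ∈ E := by
        intro x hx
        by_cases hne : x = z
        · exact Or.inl hne
        · exact Or.inr ⟨hx, hclDspec x hx hne⟩
      have hcl : ∀ u : ℕ → X, (∀ n, u n ∈ E) → ∃ c ∈ E, MapClusterPt c atTop u := by
        intro u hu
        obtain ⟨c, hc⟩ := exists_mapClusterPt u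
        have hcclD : c ∈ closure D := by
          have : c ∈ closure E := by
            rw [mem_closure_iff_nhds]
            intro N hN
            obtain ⟨n, -, hn⟩ := hc.freq hN 0
            exact ⟨u n, hn, hu n⟩
          have hEclD : closure E ⊆ closure D := by
            rw [hEdef]
            calc closure (closure D ∩ X₁) ⊆ closure (closure D) := closure_mono inter_subset_left
              _ = closure D := closure_closure
          exact hEclD this
        rcases hclDE c hcclD with h | h
        · exfalso
          subst h
          apply hcon (Set.range u) (by rintro x ⟨n, rfl⟩; exact (hu n).2) (countable_range u)
          rw [mem_closure_iff_nhds]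
          intro N hN
          obtain ⟨n, -, hn⟩ := hc.freq hN 0
          exact ⟨u n, hn, ⟨n, rfl⟩⟩
        · exact ⟨c, h, hc⟩
      have hext : ∀ Dm ∈ 𝒟₁, ∃ V, IsOpen V ∧ Dm = V ∩ X₁ := h1.rel
      choose! Vf hVfo hVfeq using hext
      have hEcomp : IsCompact E := by
        rw [isCompact_iff_finite_subcover]
        intro ι U hUo hUcov
        set 𝒱 : Set (Set X) := {W | ∃ Dm ∈ 𝒟₁, W = Vf Dm ∧ ∃ i : ι, Dm ⊆ U i} with h𝒱def
        have h𝒱o : ∀ V ∈ 𝒱, IsOpen V := by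
          rintro V ⟨Dm, hDm, rfl, -⟩; exact hVfo Dm hDm
        have h𝒱cov : E ⊆ ⋃₀ 𝒱 := by
          intro x hx
          obtain ⟨i, hi⟩ := mem_iUnion.mp (hUcov hx)
          obtain ⟨Dm, hDm, hxDm, hDmU⟩ := h1.basis x hx.2 (U i) (hUo i) hi
          refine ⟨Vf Dm, ⟨Dm, hDm, rfl, i, hDmU⟩, ?_⟩
          have := hVfeq Dm hDm
          rw [this] at hxDm
          exact hxDm.1
        have h𝒱pc : ∀ x ∈ E, {V ∈ 𝒱 | x ∈ V}.Countable := by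
          intro x hx
          have hsub : {V ∈ 𝒱 | x ∈ V} ⊆ (fun Dm => Vf Dm) '' {Dm ∈ 𝒟₁ | x ∈ Dm} := by
            rintro V ⟨⟨Dm, hDm, rfl, -⟩, hxV⟩
            refine ⟨Dm, ⟨hDm, ?_⟩, rfl⟩
            rw [hVfeq Dm hDm]
            exact ⟨hxV, hx.2⟩
          exact (((h1.pc x).image _).mono hsub)
        obtain ⟨t, ht𝒱, htcov⟩ := pc_main hcl h𝒱o h𝒱cov h𝒱pc
        have hidx : ∀ W ∈ t, ∃ i : ι, W ∩ X₁ ⊆ U i := by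
          intro W hW
          obtain ⟨Dm, hDm, rfl, i, hi⟩ := ht𝒱 hW
          refine ⟨i, ?_⟩
          rw [← hVfeq Dm hDm]
          exact hi
        choose idx hidx' using hidx
        refine ⟨t.attach.image (fun W => idx W.1 W.2), ?_⟩
        intro x hx
        obtain ⟨W, hWt, hxW⟩ := htcov hx
        rw [mem_iUnion]
        refine ⟨idx W hWt, ?_⟩
        rw [mem_iUnion]
        refine ⟨Finset.mem_image.mpr ⟨⟨W, hWt⟩, Finset.mem_attach _ _, rfl⟩, ?_⟩
        exact hidx' W hWt ⟨hxW, hx.2⟩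
      have hfinal : closure D ⊆ E := hEcomp.isClosed.closure_subset_iff.mpr hDE
      exact hz1 (hfinal hzD).2
    · -- case (g): closure D is a compact subset of X₁; use Miščenko + separability
      have hKX₁ : closure D ⊆ X₁ := fun x hx =>
        hclDspec x hx (fun h => hzD (h ▸ hx))
      have hKcomp : IsCompact (closure D) := isClosed_closure.isCompact
      obtain ⟨𝒞, h𝒞sub, h𝒞c, h𝒞basis⟩ := miscenko hKcomp (h1.mono hKX₁)
      have hsel : ∀ M : Set X, ∃ p, (M ∩ D).Nonempty → p ∈ M ∩ D := by
        intro M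
        by_cases h : (M ∩ D).Nonempty
        · exact ⟨h.choose, fun _ => h.choose_spec⟩
        · exact ⟨z, fun hc => absurd hc h⟩
      choose p hp using hsel
      set D₀ : Set X := p '' {M ∈ 𝒞 | (M ∩ D).Nonempty} with hD₀def
      have hD₀c : D₀.Countable := (h𝒞c.mono (sep_subset _ _)).image _
      have hDD₀ : D ⊆ closure D₀ := by
        intro x hx
        rw [mem_closure_iff]
        intro U hUo hxU
        obtain ⟨M, hM, hxM, hMU⟩ := h𝒞basis x (subset_closure hx) U hUo hxU
        have hMD : (M ∩ D).Nonempty := ⟨x, hxM, hx⟩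
        exact ⟨p M, hMU (hp M hMD).1, ⟨M, ⟨hM, hMD⟩, rfl⟩⟩
      have hD₀D : D₀ ⊆ D := by
        rintro x ⟨M, hM, rfl⟩
        exact (hp M hM.2).2
      set S : Set ℝ := {a ∈ J | f a ∈ D₀} with hSdef
      have hSc : S.Countable := by
        have hsub : S ⊆ ⋃ x ∈ D₀, {a ∈ J | f a = x} := by
          rintro a ⟨ha, hfa⟩
          exact mem_biUnion hfa ⟨ha, rfl⟩
        exact (hD₀c.biUnion (fun x _ => hfib x)).mono hsub
      have hbound : ∃ a ∈ J, ∀ s ∈ S, WellOrderingRel s a := by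
        by_contra hcb
        push_neg at hcb
        apply hJunc
        have hsub : J ⊆ ⋃ s ∈ S, ({s} ∪ {b | WellOrderingRel b s}) := by
          intro a ha
          obtain ⟨s, hsS, hnrs⟩ := hcb a ha
          rcases trichotomous_of WellOrderingRel a s with h | h | h
          · exact mem_biUnion hsS (Or.inr h)
          · exact mem_biUnion hsS (Or.inl (by rw [h]; exact rfl))
          · exact absurd h hnrs
        exact (hSc.biUnion (fun s hs => (countable_singleton s).union hs.1)).mono hsub
      obtain ⟨astar, haJ, haS⟩ := hbound
      have hD₀sub : D₀ ⊆ f '' {b | WellOrderingRel b astar} := by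
        intro x hx
        obtain ⟨a, ha, rfl⟩ := hD₀D hx
        exact ⟨a, haS a ⟨ha, hx⟩, rfl⟩
      have : f astar ∈ closure (f '' {b | WellOrderingRel b astar}) :=
        (closure_mono hD₀sub) (hDD₀ ⟨astar, haJ, rfl⟩)
      exact (hfJ astar haJ).2.2 this


theorem lemma_W [CompactSpace X] [T2Space X] {X₁ X₂ : Set X} (hcov : X₁ ∪ X₂ = univ)
    {𝒟₁ 𝒟₂ : Set (Set X)} (h1 : RelBase X₁ 𝒟₁) (h2 : RelBase X₂ 𝒟₂)
    {z : X} (hz2 : z ∈ X₂) (hz1c : z ∈ closure X₁) (hz1 : z ∉ X₁) :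
    {D ∈ 𝒟₁ | ∃ V, IsOpen V ∧ z ∈ V ∧ V ∩ X₁ ⊆ D}.Countable := by
  obtain ⟨T, hTX₁, hTc, hzT⟩ := lemma_T hcov h1 h2 hz2 hz1c hz1
  have hsel : ∀ D : Set X, ∃ t,
      (D ∈ 𝒟₁ ∧ ∃ V, IsOpen V ∧ z ∈ V ∧ V ∩ X₁ ⊆ D) → (t ∈ T ∧ t ∈ D) := by
    intro D
    by_cases hD : D ∈ 𝒟₁ ∧ ∃ V, IsOpen V ∧ z ∈ V ∧ V ∩ X₁ ⊆ D
    · obtain ⟨-, V, hVo, hzV, hVD⟩ := hD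
      obtain ⟨t, htV, htT⟩ := mem_closure_iff.mp hzT V hVo hzV
      exact ⟨t, fun _ => ⟨htT, hVD ⟨htV, hTX₁ htT⟩⟩⟩
    · exact ⟨z, fun h => absurd h hD⟩
  choose sel hsel' using hsel
  have hsub : {D ∈ 𝒟₁ | ∃ V, IsOpen V ∧ z ∈ V ∧ V ∩ X₁ ⊆ D} ⊆
      ⋃ t ∈ T, {D ∈ 𝒟₁ | t ∈ D} := by
    intro D hD
    have h := hsel' D hD
    exact mem_biUnion h.1 ⟨hD.1, h.2⟩
  exact (hTc.biUnion (fun t _ => h1.pc t)).mono hsub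

end CIM

theorem closure_inter_metrizable {X : Type*} [TopologicalSpace X]
    [CompactSpace X] [T2Space X] (X₁ X₂ : Set X) (hcover : X₁ ∪ X₂ = Set.univ)
    (h1 : HasPointCountableBase ↥X₁) (h2 : HasPointCountableBase ↥X₂) :
    HasPointCountableBase ↥(closure X₁ ∩ closure X₂) ∧
      TopologicalSpace.MetrizableSpace ↥(closure X₁ ∩ closure X₂) := by
  classical
  obtain ⟨𝒟₁, hD1⟩ := relBase_of_subtype h1
  obtain ⟨𝒟₂, hD2⟩ := relBase_of_subtype h2
  set C : Set X := closure X₁ ∩ closure X₂ with hCdef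
  have hCcl : IsClosed C := isClosed_closure.inter isClosed_closure
  have hCcomp : IsCompact C := hCcl.isCompact
  have hmem : ∀ x : X, x ∈ X₁ ∨ x ∈ X₂ := by
    intro x
    have : x ∈ X₁ ∪ X₂ := hcover ▸ mem_univ x
    exact this
  -- the extension operator and its properties
  let e : Set X → Set X → Set X := fun S D => (closure (S \ D))ᶜ
  have heo : ∀ S D, IsOpen (e S D) := fun S D => isClosed_closure.isOpen_compl
  have hF1a : ∀ (S D V : Set X), IsOpen V → D = V ∩ S → D ⊆ e S D := by
    intro S D V hVo hDV x hxD
    intro hc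
    have hxV : x ∈ V := by rw [hDV] at hxD; exact hxD.1
    obtain ⟨p, hpV, hpSD⟩ := mem_closure_iff.mp hc V hVo hxV
    exact hpSD.2 (by rw [hDV]; exact ⟨hpV, hpSD.1⟩)
  have hF1b : ∀ S D : Set X, e S D ∩ S ⊆ D := by
    intro S D x hx
    by_contra hxD
    exact hx.1 (subset_closure ⟨hx.2, hxD⟩)
  have hF2 : ∀ S D : Set X, D ⊆ S → e S D ∩ closure S ⊆ closure D := by
    intro S D hDS x hx
    have : closure S = closure D ∪ closure (S \ D) := by
      rw [← closure_union, union_diff_cancel hDS]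
    rcases this ▸ hx.2 with h | h
    · exact h
    · exact absurd h hx.1
  -- the relative base for C
  set 𝒟 : Set (Set X) := ((fun D => e X₁ D ∩ C) '' 𝒟₁) ∪ ((fun D => e X₂ D ∩ C) '' 𝒟₂)
    with h𝒟def
  have hCX₁ : C ⊆ closure X₁ := inter_subset_left
  have hCX₂ : C ⊆ closure X₂ := inter_subset_right
  have hrelC : RelBase C 𝒟 := by
    refine ⟨?_, ?_, ?_⟩
    · rintro M (⟨D, hD, rfl⟩ | ⟨D, hD, rfl⟩)
      · exact ⟨e X₁ D, heo X₁ D, rfl⟩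
      · exact ⟨e X₂ D, heo X₂ D, rfl⟩
    · intro p hp U hUo hpU
      obtain ⟨W, hWo, hpW, hWU⟩ := reg_helper hUo hpU
      rcases hmem p with hp1 | hp2
      · obtain ⟨D, hD, hpD, hDW⟩ := hD1.basis p hp1 W hWo hpW
        obtain ⟨V, hVo, hDV⟩ := hD1.rel D hD
        refine ⟨e X₁ D ∩ C, Or.inl ⟨D, hD, rfl⟩, ⟨hF1a X₁ D V hVo hDV hpD, hp⟩, ?_⟩
        intro x hx
        have : x ∈ closure D := hF2 X₁ D (by rw [hDV]; exact inter_subset_right)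
          ⟨hx.1, hCX₁ hx.2⟩
        exact hWU (closure_mono hDW this)
      · obtain ⟨D, hD, hpD, hDW⟩ := hD2.basis p hp2 W hWo hpW
        obtain ⟨V, hVo, hDV⟩ := hD2.rel D hD
        refine ⟨e X₂ D ∩ C, Or.inr ⟨D, hD, rfl⟩, ⟨hF1a X₂ D V hVo hDV hpD, hp⟩, ?_⟩
        intro x hx
        have : x ∈ closure D := hF2 X₂ D (by rw [hDV]; exact inter_subset_right)
          ⟨hx.1, hCX₂ hx.2⟩
        exact hWU (closure_mono hDW this)
    · intro x
      have hpart : {M ∈ 𝒟 | x ∈ M} ⊆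
          ((fun D => e X₁ D ∩ C) '' {D ∈ 𝒟₁ | x ∈ e X₁ D ∩ C}) ∪
          ((fun D => e X₂ D ∩ C) '' {D ∈ 𝒟₂ | x ∈ e X₂ D ∩ C}) := by
        rintro M ⟨(⟨D, hD, rfl⟩ | ⟨D, hD, rfl⟩), hxM⟩
        · exact Or.inl ⟨D, ⟨hD, hxM⟩, rfl⟩
        · exact Or.inr ⟨D, ⟨hD, hxM⟩, rfl⟩
      apply Set.Countable.mono hpart
      apply Set.Countable.union
      · apply Set.Countable.image
        by_cases hxC : x ∈ C
        · rcases hmem x with hx1 | hx2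
          · apply (hD1.pc x).mono
            intro D hD
            exact ⟨hD.1, hF1b X₁ D ⟨hD.2.1, hx1⟩⟩
          · by_cases hx1 : x ∈ X₁
            · apply (hD1.pc x).mono
              intro D hD
              exact ⟨hD.1, hF1b X₁ D ⟨hD.2.1, hx1⟩⟩
            · apply (lemma_W hcover hD1 hD2 hx2 (hCX₁ hxC) hx1).mono
              intro D hD
              exact ⟨hD.1, e X₁ D, heo X₁ D, hD.2.1, hF1b X₁ D⟩
        · apply Set.Countable.mono _ countable_empty
          intro D hD
          exact absurd hD.2.2 hxC
      · apply Set.Countable.image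
        by_cases hxC : x ∈ C
        · rcases hmem x with hx1 | hx2
          · by_cases hx2 : x ∈ X₂
            · apply (hD2.pc x).mono
              intro D hD
              exact ⟨hD.1, hF1b X₂ D ⟨hD.2.1, hx2⟩⟩
            · apply (lemma_W (by rw [union_comm]; exact hcover) hD2 hD1 hx1 (hCX₂ hxC) hx2).mono
              intro D hD
              exact ⟨hD.1, e X₂ D, heo X₂ D, hD.2.1, hF1b X₂ D⟩
          · apply (hD2.pc x).mono
            intro D hD
            exact ⟨hD.1, hF1b X₂ D ⟨hD.2.1, hx2⟩⟩
        · apply Set.Countable.mono _ countable_empty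
          intro D hD
          exact absurd hD.2.2 hxC
  -- Miščenko: countable relative base for C
  obtain ⟨𝒞, h𝒞sub, h𝒞c, h𝒞basis⟩ := miscenko hCcomp hrelC
  -- transfer to the subtype
  set ℬC : Set (Set ↥C) := (fun M => (Subtype.val ⁻¹' M : Set ↥C)) '' 𝒞 with hℬCdef
  have hℬCc : ℬC.Countable := h𝒞c.image _
  have hbasis : IsTopologicalBasis ℬC := by
    apply isTopologicalBasis_of_isOpen_of_nhds
    · rintro u ⟨M, hM, rfl⟩
      obtain ⟨V, hVo, rfl⟩ := hrelC.rel M (h𝒞sub hM)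
      show IsOpen (Subtype.val ⁻¹' (V ∩ C) : Set ↥C)
      have : (Subtype.val ⁻¹' (V ∩ C) : Set ↥C) = Subtype.val ⁻¹' V := by
        ext a; exact ⟨fun h => h.1, fun h => ⟨h, a.2⟩⟩
      rw [this]
      exact hVo.preimage continuous_subtype_val
    · intro a u hau huo
      obtain ⟨U, hUo, hU⟩ := isOpen_induced_iff.mp huo
      have haU : (a : X) ∈ U := by rw [← hU] at hau; exact hau
      obtain ⟨M, hM, haM, hMU⟩ := h𝒞basis (a : X) a.2 U hUo haU
      refine ⟨Subtype.val ⁻¹' M, ⟨M, hM, rfl⟩, haM, ?_⟩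
      intro b hb
      rw [← hU]
      exact hMU hb
  constructor
  · exact ⟨ℬC, hbasis, fun x => hℬCc.mono (sep_subset _ _)⟩
  · haveI : CompactSpace ↥C := isCompact_iff_compactSpace.mp hCcomp
    haveI : SecondCountableTopology ↥C := hbasis.secondCountableTopology hℬCc
    infer_instance
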